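/- For stable configuration structures without equidepth auto-concurrency, any reverse bisimulation is a reverse homogeneous equidepth step bisimulation: in particular, if R is an RB and R(X, Y), then for every n ∈ ℕ, R(X_{≤n}, Y_{≤n}) and the sets of labelled events of X and Y at each depth level n coincide. -/

import Mathlib

universe u v

/-- A configuration structure over event type `E` and label alphabet `L`:
a family of finite sets of events (configurations) with a labelling. -/
structure CS (E : Type u) (L : Type v) where
  C : Set (Set E)
  finite : ∀ X ∈ C, X.Finite
  label : E → L

namespace CS

variable {E E₁ E₂ : Type u} {L : Type v}

/-- Stability: rooted, connected, closed under bounded unions and intersections. -/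
def IsStable (𝒞 : CS E L) : Prop :=
  ∅ ∈ 𝒞.C ∧
  (∀ X ∈ 𝒞.C, X ≠ ∅ → ∃ e ∈ X, X \ {e} ∈ 𝒞.C) ∧
  (∀ X ∈ 𝒞.C, ∀ Y ∈ 𝒞.C, ∀ Z ∈ 𝒞.C, X ∪ Y ⊆ Z → X ∪ Y ∈ 𝒞.C) ∧
  (∀ X ∈ 𝒞.C, ∀ Y ∈ 𝒞.C, ∀ Z ∈ 𝒞.C, X ∪ Y ⊆ Z → X ∩ Y ∈ 𝒞.C)

/-- Causality: `d ≤_X e` iff every sub-configuration of `X` containing `e` contains `d`. -/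
def le (𝒞 : CS E L) (X : Set E) (d e : E) : Prop :=
  ∀ Y ∈ 𝒞.C, Y ⊆ X → e ∈ Y → d ∈ Y

/-- Strict causality `d <_X e`. -/
def lt (𝒞 : CS E L) (X : Set E) (d e : E) : Prop :=
  le 𝒞 X d e ∧ d ≠ e

/-- Concurrency within a configuration. -/
def co (𝒞 : CS E L) (X : Set E) (d e : E) : Prop :=
  ¬ lt 𝒞 X d e ∧ ¬ lt 𝒞 X e d

/-- The set of minimal events of a configuration. -/
def minE (𝒞 : CS E L) (X : Set E) : Set E :=
  {e | e ∈ X ∧ ∀ d ∈ X, ¬ lt 𝒞 X d e}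

/-- Depth of an event in a configuration: the length of the longest
causal chain (w.r.t. `<_X`) in `X` up to and including `e`. -/
noncomputable def depth (𝒞 : CS E L) (X : Set E) (e : E) : ℕ :=
  sSup {n | ∃ l : List E, l.length = n ∧ l.Chain' (lt 𝒞 X) ∧
    (∀ x ∈ l, x ∈ X) ∧ l.getLast? = some e}

/-- Multiset of labels of a (finite) set of events. -/
noncomputable def labelMS (𝒞 : CS E L) (S : Set E) : Multiset L := by
  classical exact if h : S.Finite then h.toFinset.val.map 𝒞.label else 0

/-- Single-event forward transition `X —a→ X'`. -/
def FTrans (𝒞 : CS E L) (a : L) (X X' : Set E) : Prop :=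
  X ∈ 𝒞.C ∧ X' ∈ 𝒞.C ∧ X ⊆ X' ∧ ∃ e, X' \ X = {e} ∧ 𝒞.label e = a

/-- Single-event reverse transition `X ⇝a X'`. -/
def RTrans (𝒞 : CS E L) (a : L) (X X' : Set E) : Prop :=
  FTrans 𝒞 a X' X

/-- Step transition `X —A→ X'`: the added events are pairwise concurrent
in `X'` and carry the label multiset `A`. -/
def Step (𝒞 : CS E L) (A : Multiset L) (X X' : Set E) : Prop :=
  X ∈ 𝒞.C ∧ X' ∈ 𝒞.C ∧ X ⊆ X' ∧ ∃ F : Finset E, ↑F = X' \ X ∧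
    (∀ d ∈ F, ∀ e ∈ F, co 𝒞 X' d e) ∧ F.val.map 𝒞.label = A

/-- Reverse step transition `X ⇝A X'`. -/
def RStep (𝒞 : CS E L) (A : Multiset L) (X X' : Set E) : Prop :=
  Step 𝒞 A X' X

/-- Equidepth step: all added events have the same depth in `X'`. -/
def EqStep (𝒞 : CS E L) (A : Multiset L) (X X' : Set E) : Prop :=
  Step 𝒞 A X X' ∧ ∀ d ∈ X' \ X, ∀ e ∈ X' \ X, depth 𝒞 X' d = depth 𝒞 X' e

/-- Reverse equidepth step `X ⇝A= X'`. -/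
def REqStep (𝒞 : CS E L) (A : Multiset L) (X X' : Set E) : Prop :=
  EqStep 𝒞 A X' X

/-- Single-event forward transition with depth: the new event has label `a`
and depth `k` in `X'`. -/
def FTransD (𝒞 : CS E L) (a : L) (k : ℕ) (X X' : Set E) : Prop :=
  X ∈ 𝒞.C ∧ X' ∈ 𝒞.C ∧ X ⊆ X' ∧
    ∃ e, X' \ X = {e} ∧ 𝒞.label e = a ∧ depth 𝒞 X' e = k

/-- Single-event reverse transition with depth. -/
def RTransD (𝒞 : CS E L) (a : L) (k : ℕ) (X X' : Set E) : Prop :=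
  FTransD 𝒞 a k X' X

/-- A multiset of labels is homogeneous if all its elements are equal. -/
def Hom (A : Multiset L) : Prop := ∀ a ∈ A, ∀ b ∈ A, a = b

/-- `R` is a relation between configurations of `𝒞` and `𝒟`, containing `(∅, ∅)`. -/
def Dom (𝒞 : CS E₁ L) (𝒟 : CS E₂ L) (R : Set E₁ → Set E₂ → Prop) : Prop :=
  R ∅ ∅ ∧ ∀ X Y, R X Y → X ∈ 𝒞.C ∧ Y ∈ 𝒟.C

/-- Interleaving bisimulation. -/
def IsIB (𝒞 : CS E₁ L) (𝒟 : CS E₂ L) (R : Set E₁ → Set E₂ → Prop) : Prop :=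
  Dom 𝒞 𝒟 R ∧ ∀ X Y, R X Y →
    (∀ a X', FTrans 𝒞 a X X' → ∃ Y', FTrans 𝒟 a Y Y' ∧ R X' Y') ∧
    (∀ a Y', FTrans 𝒟 a Y Y' → ∃ X', FTrans 𝒞 a X X' ∧ R X' Y')

/-- Reverse bisimulation: an IB also matching reverse single-event transitions. -/
def IsRB (𝒞 : CS E₁ L) (𝒟 : CS E₂ L) (R : Set E₁ → Set E₂ → Prop) : Prop :=
  IsIB 𝒞 𝒟 R ∧ ∀ X Y, R X Y →
    (∀ a X', RTrans 𝒞 a X X' → ∃ Y', RTrans 𝒟 a Y Y' ∧ R X' Y') ∧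
    (∀ a Y', RTrans 𝒟 a Y Y' → ∃ X', RTrans 𝒞 a X X' ∧ R X' Y')

/-- Step bisimulation. -/
def IsSB (𝒞 : CS E₁ L) (𝒟 : CS E₂ L) (R : Set E₁ → Set E₂ → Prop) : Prop :=
  Dom 𝒞 𝒟 R ∧ ∀ X Y, R X Y →
    (∀ A X', Step 𝒞 A X X' → ∃ Y', Step 𝒟 A Y Y' ∧ R X' Y') ∧
    (∀ A Y', Step 𝒟 A Y Y' → ∃ X', Step 𝒞 A X X' ∧ R X' Y')

/-- Reverse step bisimulation: an SB also matching reverse steps. -/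
def IsRSB (𝒞 : CS E₁ L) (𝒟 : CS E₂ L) (R : Set E₁ → Set E₂ → Prop) : Prop :=
  IsSB 𝒞 𝒟 R ∧ ∀ X Y, R X Y →
    (∀ A X', RStep 𝒞 A X X' → ∃ Y', RStep 𝒟 A Y Y' ∧ R X' Y') ∧
    (∀ A Y', RStep 𝒟 A Y Y' → ∃ X', RStep 𝒞 A X X' ∧ R X' Y')

/-- Reverse homogeneous step bisimulation: matches forward single-event
transitions and reverse homogeneous steps. -/
def IsRHSB (𝒞 : CS E₁ L) (𝒟 : CS E₂ L) (R : Set E₁ → Set E₂ → Prop) : Prop :=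
  Dom 𝒞 𝒟 R ∧ ∀ X Y, R X Y →
    (∀ a X', FTrans 𝒞 a X X' → ∃ Y', FTrans 𝒟 a Y Y' ∧ R X' Y') ∧
    (∀ a Y', FTrans 𝒟 a Y Y' → ∃ X', FTrans 𝒞 a X X' ∧ R X' Y') ∧
    (∀ A X', Hom A → RStep 𝒞 A X X' → ∃ Y', RStep 𝒟 A Y Y' ∧ R X' Y') ∧
    (∀ A Y', Hom A → RStep 𝒟 A Y Y' → ∃ X', RStep 𝒞 A X X' ∧ R X' Y')

/-- Reverse homogeneous equidepth step bisimulation. -/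
def IsRHESB (𝒞 : CS E₁ L) (𝒟 : CS E₂ L) (R : Set E₁ → Set E₂ → Prop) : Prop :=
  Dom 𝒞 𝒟 R ∧ ∀ X Y, R X Y →
    (∀ a X', FTrans 𝒞 a X X' → ∃ Y', FTrans 𝒟 a Y Y' ∧ R X' Y') ∧
    (∀ a Y', FTrans 𝒟 a Y Y' → ∃ X', FTrans 𝒞 a X X' ∧ R X' Y') ∧
    (∀ A X', Hom A → REqStep 𝒞 A X X' → ∃ Y', REqStep 𝒟 A Y Y' ∧ R X' Y') ∧
    (∀ A Y', Hom A → REqStep 𝒟 A Y Y' → ∃ X', REqStep 𝒞 A X X' ∧ R X' Y')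

/-- Depth-respecting bisimulation. -/
def IsDB (𝒞 : CS E₁ L) (𝒟 : CS E₂ L) (R : Set E₁ → Set E₂ → Prop) : Prop :=
  Dom 𝒞 𝒟 R ∧ ∀ X Y, R X Y →
    (∀ a k X', FTransD 𝒞 a k X X' → ∃ Y', FTransD 𝒟 a k Y Y' ∧ R X' Y') ∧
    (∀ a k Y', FTransD 𝒟 a k Y Y' → ∃ X', FTransD 𝒞 a k X X' ∧ R X' Y')

/-- Reverse depth-respecting bisimulation. -/
def IsRDB (𝒞 : CS E₁ L) (𝒟 : CS E₂ L) (R : Set E₁ → Set E₂ → Prop) : Prop :=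
  IsDB 𝒞 𝒟 R ∧ ∀ X Y, R X Y →
    (∀ a k X', RTransD 𝒞 a k X X' → ∃ Y', RTransD 𝒟 a k Y Y' ∧ R X' Y') ∧
    (∀ a k Y', RTransD 𝒟 a k Y Y' → ∃ X', RTransD 𝒞 a k X X' ∧ R X' Y')

/-- The lifting of a configuration structure w.r.t. a configuration `M`. -/
def lift (𝒞 : CS E L) (M : Set E) : CS E L where
  C := {Z | ∃ X, X ∈ 𝒞.C ∧ M ⊆ X ∧ minE 𝒞 X = minE 𝒞 M ∧ Z = X \ M}
  finite := by
    rintro Z ⟨X, hX, -, -, rfl⟩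
    exact (𝒞.finite X hX).subset Set.diff_subset
  label := 𝒞.label

/-- Events of `X` of depth at most `n`. -/
def levelLe (𝒞 : CS E L) (X : Set E) (n : ℕ) : Set E :=
  {e | e ∈ X ∧ depth 𝒞 X e ≤ n}

/-- Events of `X` of depth exactly `n`. -/
def levelEq (𝒞 : CS E L) (X : Set E) (n : ℕ) : Set E :=
  {e | e ∈ X ∧ depth 𝒞 X e = n}

/-- No equidepth auto-concurrency: distinct concurrent events never share
both label and depth. -/
def NoEqAC (𝒞 : CS E L) : Prop :=
  ∀ X ∈ 𝒞.C, ∀ d ∈ X, ∀ e ∈ X, co 𝒞 X d e → 𝒞.label d = 𝒞.label e →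
    depth 𝒞 X d = depth 𝒞 X e → d = e

/-- `f` (a set of pairs) is a label- and order-preserving isomorphism
between configurations `X` and `Y`. -/
def IsIso (𝒞 : CS E₁ L) (𝒟 : CS E₂ L) (X : Set E₁) (Y : Set E₂)
    (f : Set (E₁ × E₂)) : Prop :=
  (∀ p ∈ f, p.1 ∈ X ∧ p.2 ∈ Y) ∧
  (∀ d ∈ X, ∃! e, (d, e) ∈ f) ∧
  (∀ e ∈ Y, ∃! d, (d, e) ∈ f) ∧
  (∀ p ∈ f, 𝒞.label p.1 = 𝒟.label p.2) ∧
  (∀ p ∈ f, ∀ q ∈ f, (lt 𝒞 X p.1 q.1 ↔ lt 𝒟 Y p.2 q.2))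

/-- Hereditary history-preserving bisimulation. -/
def IsHH (𝒞 : CS E₁ L) (𝒟 : CS E₂ L)
    (R : Set (Set E₁ × Set E₂ × Set (E₁ × E₂))) : Prop :=
  (∅, ∅, ∅) ∈ R ∧
  ∀ X Y f, (X, Y, f) ∈ R →
    X ∈ 𝒞.C ∧ Y ∈ 𝒟.C ∧ IsIso 𝒞 𝒟 X Y f ∧
    (∀ a X', FTrans 𝒞 a X X' → ∃ Y' f', FTrans 𝒟 a Y Y' ∧
      (X', Y', f') ∈ R ∧ {p ∈ f' | p.1 ∈ X} = f) ∧
    (∀ a Y', FTrans 𝒟 a Y Y' → ∃ X' f', FTrans 𝒞 a X X' ∧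
      (X', Y', f') ∈ R ∧ {p ∈ f' | p.1 ∈ X} = f) ∧
    (∀ a X', RTrans 𝒞 a X X' → ∃ Y' f', RTrans 𝒟 a Y Y' ∧
      (X', Y', f') ∈ R ∧ {p ∈ f | p.1 ∈ X'} = f')

end CS

open CS
section Basic

variable {E : Type u} {L : Type v} (𝒞 : CS E L)

lemma le_mono' {X X' : Set E} (h : X' ⊆ X) {d f : E} (hle : CS.le 𝒞 X d f) :
    CS.le 𝒞 X' d f := fun Z hZ hZX hfZ => hle Z hZ (hZX.trans h) hfZ

lemma le_of_sub (hst : IsStable 𝒞) {X X' : Set E} (hX : X ∈ 𝒞.C) (hX' : X' ∈ 𝒞.C)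
    (hsub : X' ⊆ X) {d f : E} (hf : f ∈ X') (hle : CS.le 𝒞 X' d f) : CS.le 𝒞 X d f := by
  intro Z hZ hZX hfZ
  have hinter : Z ∩ X' ∈ 𝒞.C :=
    hst.2.2.2 Z hZ X' hX' X hX (Set.union_subset hZX hsub)
  exact (hle (Z ∩ X') hinter Set.inter_subset_right ⟨hfZ, hf⟩).1

lemma lt_mono' {X X' : Set E} (h : X' ⊆ X) {d f : E} (hlt : CS.lt 𝒞 X d f) :
    CS.lt 𝒞 X' d f := ⟨le_mono' 𝒞 h hlt.1, hlt.2⟩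

lemma lt_of_sub (hst : IsStable 𝒞) {X X' : Set E} (hX : X ∈ 𝒞.C) (hX' : X' ∈ 𝒞.C)
    (hsub : X' ⊆ X) {d f : E} (hf : f ∈ X') (hlt : CS.lt 𝒞 X' d f) : CS.lt 𝒞 X d f :=
  ⟨le_of_sub 𝒞 hst hX hX' hsub hf hlt.1, hlt.2⟩

lemma le_antisymm'' (hst : IsStable 𝒞) :
    ∀ N : ℕ, ∀ X ∈ 𝒞.C, X.ncard ≤ N → ∀ d ∈ X, ∀ e ∈ X,
      CS.le 𝒞 X d e → CS.le 𝒞 X e d → d = e := by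
  intro N
  induction N with
  | zero =>
    intro X hX hcard d hd e he _ _
    have hfin := 𝒞.finite X hX
    have : X = ∅ := by
      rw [← Set.ncard_eq_zero hfin]; omega
    simp [this] at hd
  | succ N ih =>
    intro X hX hcard d hd e he hde hed
    by_contra hne
    have hXne : X ≠ ∅ := by rintro rfl; exact hd
    obtain ⟨g, hg, hXg⟩ := hst.2.1 X hX hXne
    have hfin := 𝒞.finite X hX
    by_cases hgd : g = d
    · subst hgd
      exact (hde (X \ {g}) hXg Set.diff_subset ⟨he, fun h => hne (Set.mem_singleton_iff.mp h).symm⟩).2 rfl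
    · by_cases hge : g = e
      · subst hge
        exact (hed (X \ {g}) hXg Set.diff_subset ⟨hd, fun h => hne (Set.mem_singleton_iff.mp h)⟩).2 rfl
      · have hcard' : (X \ {g}).ncard ≤ N := by
          have := Set.ncard_diff_singleton_lt_of_mem hg hfin
          omega
        exact hne <| ih (X \ {g}) hXg hcard' d ⟨hd, fun h => hgd (Set.mem_singleton_iff.mp h).symm⟩
          e ⟨he, fun h => hge (Set.mem_singleton_iff.mp h).symm⟩
          (le_mono' 𝒞 Set.diff_subset hde) (le_mono' 𝒞 Set.diff_subset hed)

lemma le_antisymm' (hst : IsStable 𝒞) {X : Set E} (hX : X ∈ 𝒞.C) {d e : E}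
    (hd : d ∈ X) (he : e ∈ X) (hde : CS.le 𝒞 X d e) (hed : CS.le 𝒞 X e d) : d = e :=
  le_antisymm'' 𝒞 hst X.ncard X hX le_rfl d hd e he hde hed

lemma cs_lt_trans (hst : IsStable 𝒞) {X : Set E} (hX : X ∈ 𝒞.C) {a b c : E}
    (ha : a ∈ X) (hb : b ∈ X) (hab : CS.lt 𝒞 X a b) (hbc : CS.lt 𝒞 X b c) :
    CS.lt 𝒞 X a c := by
  refine ⟨fun Z hZ hs hc => hab.1 Z hZ hs (hbc.1 Z hZ hs hc), ?_⟩
  rintro rfl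
  exact hab.2 (le_antisymm' 𝒞 hst hX ha hb hab.1 hbc.1)

end Basic
section Chains

variable {E : Type u} {L : Type v} (𝒞 : CS E L)

lemma chain'_imp_mem {r s : E → E → Prop} :
    ∀ l : List E, (∀ x ∈ l, ∀ y ∈ l, r x y → s x y) → l.Chain' r → l.Chain' s := by
  intro l
  induction l with
  | nil => intro _ _; exact List.isChain_nil
  | cons a t ih =>
    intro h hc
    cases t with
    | nil => exact List.isChain_singleton a
    | cons b t' =>
      simp only [List.Chain', List.isChain_cons_cons] at hc ⊢
      refine ⟨h a (by simp) b (by simp) hc.1, ih ?_ hc.2⟩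
      intro x hx y hy
      exact h x (by simp [hx]) y (by simp [hy])

lemma exists_succ_of_mem_chain' {r : E → E → Prop} :
    ∀ l : List E, l.Chain' r → ∀ e f : E, e ∈ l → l.getLast? = some f → e ≠ f →
      ∃ g ∈ l, r e g := by
  intro l
  induction l with
  | nil => intro _ e f h; simp at h
  | cons a t ih =>
    intro hc e f he hlast hef
    cases t with
    | nil =>
      simp at he hlast
      exact absurd (he.trans hlast) hef
    | cons b t' =>
      simp only [List.Chain', List.isChain_cons_cons] at hc
      rcases List.mem_cons.mp he with rfl | he'
      · exact ⟨b, by simp, hc.1⟩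
      · have hlast' : (b :: t').getLast? = some f := by
          rwa [List.getLast?_cons_cons] at hlast
        obtain ⟨g, hg, hrg⟩ := ih hc.2 e f he' hlast' hef
        exact ⟨g, by simp [hg], hrg⟩

lemma chain_pairwise (hst : IsStable 𝒞) {X : Set E} (hX : X ∈ 𝒞.C) :
    ∀ l : List E, l.Chain' (CS.lt 𝒞 X) → (∀ x ∈ l, x ∈ X) → l.Pairwise (CS.lt 𝒞 X) := by
  intro l
  induction l with
  | nil => intro _ _; exact List.Pairwise.nil
  | cons a t ih =>
    intro hc hm
    have hpt : t.Pairwise (CS.lt 𝒞 X) := by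
      cases t with
      | nil => exact List.Pairwise.nil
      | cons b t' =>
        exact ih (List.isChain_cons_cons.mp hc).2 (fun x hx => hm x (by simp [hx]))
    refine List.Pairwise.cons ?_ hpt
    intro y hy
    cases t with
    | nil => simp at hy
    | cons b t' =>
      have hab : CS.lt 𝒞 X a b := (List.isChain_cons_cons.mp hc).1
      rcases List.mem_cons.mp hy with rfl | hy'
      · exact hab
      · have hby : CS.lt 𝒞 X b y := List.rel_of_pairwise_cons hpt hy'
        exact cs_lt_trans 𝒞 hst hX (hm a (by simp)) (hm b (by simp)) hab hby

lemma chain_length_le (hst : IsStable 𝒞) {X : Set E} (hX : X ∈ 𝒞.C)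
    (hfin : X.Finite) (l : List E) (hc : l.Chain' (CS.lt 𝒞 X))
    (hm : ∀ x ∈ l, x ∈ X) : l.length ≤ X.ncard := by
  classical
  have hnd : l.Nodup := (chain_pairwise 𝒞 hst hX l hc hm).imp (fun h => h.2)
  calc l.length = l.toFinset.card := (List.toFinset_card_of_nodup hnd).symm
    _ ≤ hfin.toFinset.card := by
        apply Finset.card_le_card
        intro x hx
        rw [Set.Finite.mem_toFinset]
        exact hm x (List.mem_toFinset.mp hx)
    _ = X.ncard := (Set.ncard_eq_toFinset_card X hfin).symm

end Chains
section Depth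

variable {E : Type u} {L : Type v} (𝒞 : CS E L)

/-- The set of lengths of causal chains in `X` ending at `e`. -/
def dset (X : Set E) (e : E) : Set ℕ :=
  {n | ∃ l : List E, l.length = n ∧ l.Chain' (CS.lt 𝒞 X) ∧
    (∀ x ∈ l, x ∈ X) ∧ l.getLast? = some e}

lemma depth_def (X : Set E) (e : E) : depth 𝒞 X e = sSup (dset 𝒞 X e) := rfl

lemma one_mem_dset {X : Set E} {e : E} (he : e ∈ X) : 1 ∈ dset 𝒞 X e :=
  ⟨[e], rfl, List.isChain_singleton e, by simpa using he, rfl⟩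

lemma dset_bddAbove (hst : IsStable 𝒞) {X : Set E} (hX : X ∈ 𝒞.C) (e : E) :
    BddAbove (dset 𝒞 X e) := by
  refine ⟨X.ncard, ?_⟩
  rintro n ⟨l, rfl, hc, hm, _⟩
  exact chain_length_le 𝒞 hst hX (𝒞.finite X hX) l hc hm

lemma le_depth_of_mem (hst : IsStable 𝒞) {X : Set E} (hX : X ∈ 𝒞.C) {e : E} {n : ℕ}
    (hn : n ∈ dset 𝒞 X e) : n ≤ depth 𝒞 X e :=
  le_csSup (dset_bddAbove 𝒞 hst hX e) hn

lemma one_le_depth (hst : IsStable 𝒞) {X : Set E} (hX : X ∈ 𝒞.C) {e : E} (he : e ∈ X) :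
    1 ≤ depth 𝒞 X e :=
  le_depth_of_mem 𝒞 hst hX (one_mem_dset 𝒞 he)

lemma depth_mem_dset (hst : IsStable 𝒞) {X : Set E} (hX : X ∈ 𝒞.C) {e : E} (he : e ∈ X) :
    depth 𝒞 X e ∈ dset 𝒞 X e :=
  Nat.sSup_mem ⟨1, one_mem_dset 𝒞 he⟩ (dset_bddAbove 𝒞 hst hX e)

lemma depth_lt_of_lt (hst : IsStable 𝒞) {X : Set E} (hX : X ∈ 𝒞.C) {e f : E}
    (he : e ∈ X) (hf : f ∈ X) (hlt : CS.lt 𝒞 X e f) :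
    depth 𝒞 X e < depth 𝒞 X f := by
  obtain ⟨l, hlen, hc, hm, hlast⟩ := depth_mem_dset 𝒞 hst hX he
  have hmem : depth 𝒞 X e + 1 ∈ dset 𝒞 X f := by
    refine ⟨l ++ [f], by simp [hlen], ?_, ?_, by simp⟩
    · simp only [List.Chain', List.isChain_append]
      refine ⟨hc, List.isChain_singleton f, ?_⟩
      intro x hx y hy
      simp at hy
      rw [hlast] at hx
      simp at hx
      rw [← hx, ← hy]
      exact hlt
    · intro x hx
      rcases List.mem_append.mp hx with h | h
      · exact hm x h
      · simp at h; rw [h]; exact hf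
  have := le_depth_of_mem 𝒞 hst hX hmem
  omega

lemma exists_cause (hst : IsStable 𝒞) {X : Set E} (hX : X ∈ 𝒞.C) {e : E} (he : e ∈ X)
    (h2 : 2 ≤ depth 𝒞 X e) :
    ∃ d ∈ X, CS.lt 𝒞 X d e ∧ depth 𝒞 X d = depth 𝒞 X e - 1 := by
  obtain ⟨l, hlen, hc, hm, hlast⟩ := depth_mem_dset 𝒞 hst hX he
  have hlne : l ≠ [] := by
    intro h; rw [h] at hlen; simp at hlen; omega
  have hgl : l.getLast hlne = e := by
    have := List.getLast?_eq_getLast hlne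
    rw [hlast] at this; exact (Option.some_inj.mp this).symm
  have hdecomp : l.dropLast ++ [e] = l := by
    rw [← hgl]; exact List.dropLast_append_getLast hlne
  have hdlen : l.dropLast.length = depth 𝒞 X e - 1 := by
    rw [List.length_dropLast, hlen]
  have hdne : l.dropLast ≠ [] := by
    intro h
    rw [h] at hdlen; simp at hdlen; omega
  set d := l.dropLast.getLast hdne with hd
  have hchain : (l.dropLast ++ [e]).Chain' (CS.lt 𝒞 X) := by rw [hdecomp]; exact hc
  simp only [List.Chain', List.isChain_append] at hchain
  have hlt : CS.lt 𝒞 X d e := by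
    refine hchain.2.2 d ?_ e (by simp)
    rw [List.getLast?_eq_getLast hdne]
    rfl
  have hmd : ∀ x ∈ l.dropLast, x ∈ X := by
    intro x hx
    exact hm x (by rw [← hdecomp]; exact List.mem_append.mpr (Or.inl hx))
  have hdX : d ∈ X := hmd d (List.getLast_mem hdne)
  have hge : depth 𝒞 X e - 1 ≤ depth 𝒞 X d :=
    le_depth_of_mem 𝒞 hst hX ⟨l.dropLast, hdlen, hchain.1, hmd,
      List.getLast?_eq_getLast hdne⟩
  have hltd := depth_lt_of_lt 𝒞 hst hX hdX he hlt
  exact ⟨d, hdX, hlt, by omega⟩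

end Depth
section Removal

variable {E : Type u} {L : Type v} (𝒞 : CS E L)

lemma maximal_of_removable {X : Set E} (hX' : X \ {e} ∈ 𝒞.C) :
    ∀ f ∈ X, ¬ CS.lt 𝒞 X e f := by
  intro f hf hlt
  by_cases hfe : f = e
  · exact hlt.2 hfe.symm
  · exact (hlt.1 (X \ {e}) hX' Set.diff_subset ⟨hf, hfe⟩).2 rfl

lemma maximal_of_maxdepth (hst : IsStable 𝒞) {X : Set E} (hX : X ∈ 𝒞.C) {e : E}
    (he : e ∈ X) (hmax : ∀ f ∈ X, depth 𝒞 X f ≤ depth 𝒞 X e) :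
    ∀ f ∈ X, ¬ CS.lt 𝒞 X e f := by
  intro f hf hlt
  have := depth_lt_of_lt 𝒞 hst hX he hf hlt
  have := hmax f hf
  omega

lemma removable_of_maximal (hst : IsStable 𝒞) :
    ∀ N : ℕ, ∀ X ∈ 𝒞.C, X.ncard ≤ N → ∀ e ∈ X,
      (∀ f ∈ X, ¬ CS.lt 𝒞 X e f) → X \ {e} ∈ 𝒞.C := by
  intro N
  induction N with
  | zero =>
    intro X hX hcard e he _
    have hfin := 𝒞.finite X hX
    have : X = ∅ := by rw [← Set.ncard_eq_zero hfin]; omega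
    simp [this] at he
  | succ N ih =>
    intro X hX hcard e he hmax
    have hfin := 𝒞.finite X hX
    have hXne : X ≠ ∅ := by rintro rfl; exact he
    obtain ⟨g, hg, hXg⟩ := hst.2.1 X hX hXne
    by_cases hge : g = e
    · rwa [hge] at hXg
    · have heg : e ∈ X \ {g} := ⟨he, fun h => hge (Set.mem_singleton_iff.mp h).symm⟩
      have hmax' : ∀ f ∈ X \ {g}, ¬ CS.lt 𝒞 (X \ {g}) e f := by
        intro f hf hlt
        exact hmax f hf.1 (lt_of_sub 𝒞 hst hX hXg Set.diff_subset hf hlt)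
      have hcard' : (X \ {g}).ncard ≤ N := by
        have := Set.ncard_diff_singleton_lt_of_mem hg hfin
        omega
      have hZ : (X \ {g}) \ {e} ∈ 𝒞.C := ih (X \ {g}) hXg hcard' e heg hmax'
      have hnle : ¬ CS.le 𝒞 X e g := fun hle => hmax g hg ⟨hle, fun h => hge h.symm⟩
      rw [CS.le] at hnle
      push_neg at hnle
      obtain ⟨W, hW, hWX, hgW, heW⟩ := hnle
      have hunion : (X \ {g}) \ {e} ∪ W ∈ 𝒞.C := by
        refine hst.2.2.1 _ hZ W hW X hX ?_
        exact Set.union_subset ((Set.diff_subset).trans Set.diff_subset) hWX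
      have heq : X \ {e} = (X \ {g}) \ {e} ∪ W := by
        ext x
        constructor
        · rintro ⟨hx, hxe⟩
          by_cases hxg : x = g
          · exact Or.inr (hxg ▸ hgW)
          · exact Or.inl ⟨⟨hx, hxg⟩, hxe⟩
        · rintro (⟨⟨hx, _⟩, hxe⟩ | hxW)
          · exact ⟨hx, hxe⟩
          · exact ⟨hWX hxW, fun h => heW ((Set.mem_singleton_iff.mp h) ▸ hxW)⟩
      rw [heq]
      exact hunion

lemma removable (hst : IsStable 𝒞) {X : Set E} (hX : X ∈ 𝒞.C) {e : E} (he : e ∈ X)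
    (hmax : ∀ f ∈ X, ¬ CS.lt 𝒞 X e f) : X \ {e} ∈ 𝒞.C :=
  removable_of_maximal 𝒞 hst X.ncard X hX le_rfl e he hmax

lemma depth_diff (hst : IsStable 𝒞) {X : Set E} (hX : X ∈ 𝒞.C) {e : E}
    (hX' : X \ {e} ∈ 𝒞.C) (hmax : ∀ f ∈ X, ¬ CS.lt 𝒞 X e f) {f : E}
    (hf : f ∈ X) (hfe : f ≠ e) :
    depth 𝒞 (X \ {e}) f = depth 𝒞 X f := by
  have hsets : dset 𝒞 (X \ {e}) f = dset 𝒞 X f := by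
    ext n
    constructor
    · rintro ⟨l, hlen, hc, hm, hlast⟩
      refine ⟨l, hlen, ?_, fun x hx => (hm x hx).1, hlast⟩
      refine chain'_imp_mem l ?_ hc
      intro x _ y hy hxy
      exact lt_of_sub 𝒞 hst hX hX' Set.diff_subset (hm y hy) hxy
    · rintro ⟨l, hlen, hc, hm, hlast⟩
      have henl : e ∉ l := by
        intro hel
        obtain ⟨g, hgl, hlt⟩ := exists_succ_of_mem_chain' l hc e f hel hlast (Ne.symm hfe)
        exact hmax g (hm g hgl) hlt
      refine ⟨l, hlen, ?_, ?_, hlast⟩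
      · exact List.IsChain.imp (fun a b => lt_mono' 𝒞 Set.diff_subset) hc
      · intro x hx
        exact ⟨hm x hx, fun h => henl ((Set.mem_singleton_iff.mp h) ▸ hx)⟩
  rw [depth_def, depth_def, hsets]

end Removal
section Levels

variable {E : Type u} {L : Type v} (𝒞 : CS E L)

/-- Set of labels occurring at depth `n` in `X`. -/
def labSet (X : Set E) (n : ℕ) : Set L := 𝒞.label '' (levelEq 𝒞 X n)

lemma level_inj (hst : IsStable 𝒞) (hac : NoEqAC 𝒞) {X : Set E} (hX : X ∈ 𝒞.C)
    {n : ℕ} {d e : E} (hd : d ∈ levelEq 𝒞 X n) (he : e ∈ levelEq 𝒞 X n)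
    (hlab : 𝒞.label d = 𝒞.label e) : d = e := by
  refine hac X hX d hd.1 e he.1 ⟨?_, ?_⟩ hlab (hd.2.trans he.2.symm)
  · intro hlt
    have := depth_lt_of_lt 𝒞 hst hX hd.1 he.1 hlt
    rw [hd.2, he.2] at this; omega
  · intro hlt
    have := depth_lt_of_lt 𝒞 hst hX he.1 hd.1 hlt
    rw [hd.2, he.2] at this; omega

lemma levelEq_diff (hst : IsStable 𝒞) {X : Set E} (hX : X ∈ 𝒞.C) {e : E}
    (he : e ∈ X) (hX' : X \ {e} ∈ 𝒞.C) (hmax : ∀ f ∈ X, ¬ CS.lt 𝒞 X e f) (n : ℕ) :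
    levelEq 𝒞 (X \ {e}) n = levelEq 𝒞 X n \ {e} := by
  ext f
  constructor
  · rintro ⟨⟨hf, hfe⟩, hdf⟩
    have hfe' : f ≠ e := fun h => hfe (Set.mem_singleton_iff.mpr h)
    exact ⟨⟨hf, by rwa [← depth_diff 𝒞 hst hX hX' hmax hf hfe']⟩, hfe⟩
  · rintro ⟨⟨hf, hdf⟩, hfe⟩
    have hfe' : f ≠ e := fun h => hfe (Set.mem_singleton_iff.mpr h)
    exact ⟨⟨hf, hfe⟩, by rwa [depth_diff 𝒞 hst hX hX' hmax hf hfe']⟩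

lemma labSet_diff_ne (hst : IsStable 𝒞) {X : Set E} (hX : X ∈ 𝒞.C) {e : E}
    (he : e ∈ X) (hX' : X \ {e} ∈ 𝒞.C) (hmax : ∀ f ∈ X, ¬ CS.lt 𝒞 X e f)
    {n : ℕ} (hn : depth 𝒞 X e ≠ n) :
    labSet 𝒞 (X \ {e}) n = labSet 𝒞 X n := by
  unfold labSet
  rw [levelEq_diff 𝒞 hst hX he hX' hmax n]
  have hset : levelEq 𝒞 X n \ {e} = levelEq 𝒞 X n := by
    ext f
    refine ⟨fun h => h.1, fun h => ⟨h, fun hf => hn ?_⟩⟩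
    rw [Set.mem_singleton_iff] at hf
    exact hf ▸ h.2
  rw [hset]

lemma labSet_diff_eq (hst : IsStable 𝒞) (hac : NoEqAC 𝒞) {X : Set E} (hX : X ∈ 𝒞.C)
    {e : E} (he : e ∈ X) (hX' : X \ {e} ∈ 𝒞.C) (hmax : ∀ f ∈ X, ¬ CS.lt 𝒞 X e f) :
    labSet 𝒞 (X \ {e}) (depth 𝒞 X e) = labSet 𝒞 X (depth 𝒞 X e) \ {𝒞.label e} := by
  unfold labSet
  rw [levelEq_diff 𝒞 hst hX he hX' hmax]
  have heL : e ∈ levelEq 𝒞 X (depth 𝒞 X e) := ⟨he, rfl⟩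
  ext c
  constructor
  · rintro ⟨f, ⟨hfL, hfe⟩, rfl⟩
    refine ⟨⟨f, hfL, rfl⟩, ?_⟩
    intro hc
    exact hfe (Set.mem_singleton_iff.mpr
      (level_inj 𝒞 hst hac hX hfL heL (Set.mem_singleton_iff.mp hc)))
  · rintro ⟨⟨f, hfL, rfl⟩, hc⟩
    refine ⟨f, ⟨hfL, ?_⟩, rfl⟩
    intro hfe
    exact hc (Set.mem_singleton_iff.mpr
      (congrArg 𝒞.label (Set.mem_singleton_iff.mp hfe)))

lemma labSet_diff_subset (hst : IsStable 𝒞) {X : Set E} (hX : X ∈ 𝒞.C) {e : E}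
    (he : e ∈ X) (hX' : X \ {e} ∈ 𝒞.C) (hmax : ∀ f ∈ X, ¬ CS.lt 𝒞 X e f) (n : ℕ) :
    labSet 𝒞 (X \ {e}) n ⊆ labSet 𝒞 X n := by
  unfold labSet
  rw [levelEq_diff 𝒞 hst hX he hX' hmax n]
  exact Set.image_mono Set.diff_subset

lemma labSet_empty_of_gt {X : Set E} {m : ℕ} (hmax : ∀ f ∈ X, depth 𝒞 X f ≤ m)
    {n : ℕ} (hn : m < n) : labSet 𝒞 X n = ∅ := by
  unfold labSet levelEq
  convert Set.image_empty 𝒞.label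
  ext f
  simp only [Set.mem_setOf_eq, Set.mem_empty_iff_false, iff_false]
  rintro ⟨hf, hdf⟩
  have := hmax f hf
  omega

lemma mem_labSet {X : Set E} {e : E} (he : e ∈ X) :
    𝒞.label e ∈ labSet 𝒞 X (depth 𝒞 X e) := ⟨e, ⟨he, rfl⟩, rfl⟩

lemma labSet_nonempty_elim {X : Set E} {n : ℕ} {c : L} (hc : c ∈ labSet 𝒞 X n) :
    ∃ e ∈ X, depth 𝒞 X e = n ∧ 𝒞.label e = c := by
  obtain ⟨e, ⟨he, hde⟩, rfl⟩ := hc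
  exact ⟨e, he, hde, rfl⟩

end Levels

section Trans

variable {E : Type u} {L : Type v} (𝒞 : CS E L)

lemma rtrans_elim {X X' : Set E} {a : L} (h : RTrans 𝒞 a X X') :
    ∃ e ∈ X, X' = X \ {e} ∧ 𝒞.label e = a ∧ X ∈ 𝒞.C ∧ X \ {e} ∈ 𝒞.C := by
  obtain ⟨hX', hX, hsub, e, hdiff, hlab⟩ := h
  have heX : e ∈ X := by
    have : e ∈ X \ X' := hdiff ▸ rfl
    exact this.1
  have heX' : e ∉ X' := by
    have : e ∈ X \ X' := hdiff ▸ rfl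
    exact this.2
  have hXX' : X' = X \ {e} := by
    ext x
    constructor
    · intro hx
      refine ⟨hsub hx, ?_⟩
      rintro rfl
      exact heX' hx
    · rintro ⟨hx, hxe⟩
      by_contra hxX'
      have : x ∈ X \ X' := ⟨hx, hxX'⟩
      rw [hdiff] at this
      exact hxe this
  exact ⟨e, heX, hXX', hlab, hX, hXX' ▸ hX'⟩

lemma rtrans_intro {X : Set E} (hX : X ∈ 𝒞.C) {e : E} (hX' : X \ {e} ∈ 𝒞.C)
    (he : e ∈ X) : RTrans 𝒞 (𝒞.label e) X (X \ {e}) := by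
  refine ⟨hX', hX, Set.diff_subset, e, ?_, rfl⟩
  ext x
  simp only [Set.mem_diff, Set.mem_singleton_iff]
  constructor
  · rintro ⟨hx, hx'⟩
    by_contra hxe
    exact hx' ⟨hx, hxe⟩
  · rintro rfl
    exact ⟨he, fun h => h.2 rfl⟩

end Trans
lemma diff_singleton_inj {α : Type*} {s t : Set α} {a : α} (hs : a ∈ s) (ht : a ∈ t)
    (h : s \ {a} = t \ {a}) : s = t := by
  ext x
  by_cases hx : x = a
  · subst hx; exact ⟨fun _ => ht, fun _ => hs⟩
  · constructor
    · intro hxs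
      have : x ∈ s \ {a} := ⟨hxs, hx⟩
      rw [h] at this; exact this.1
    · intro hxt
      have : x ∈ t \ {a} := ⟨hxt, hx⟩
      rw [← h] at this; exact this.1

section Bisim

variable {E₁ E₂ : Type u} {L : Type v} {𝒞 : CS E₁ L} {𝒟 : CS E₂ L}
  {R : Set E₁ → Set E₂ → Prop}

lemma rel_mem (hR : IsRB 𝒞 𝒟 R) {X Y} (hXY : R X Y) : X ∈ 𝒞.C ∧ Y ∈ 𝒟.C :=
  (hR.1.1.2 X Y hXY)

lemma rel_empty (h𝒟 : IsStable 𝒟) (hR : IsRB 𝒞 𝒟 R) {Y} (hXY : R ∅ Y) : Y = ∅ := by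
  by_contra hne
  have hY := (rel_mem hR hXY).2
  obtain ⟨g, hg, hYg⟩ := h𝒟.2.1 Y hY hne
  obtain ⟨X', hX', _⟩ := (hR.2 ∅ Y hXY).2 (𝒟.label g) (Y \ {g}) (rtrans_intro 𝒟 hY hYg hg)
  obtain ⟨e, he, _⟩ := rtrans_elim 𝒞 hX'
  exact he

lemma rev_step_left (h𝒞 : IsStable 𝒞) (hR : IsRB 𝒞 𝒟 R) {X Y} (hXY : R X Y)
    {g : E₁} (hg : g ∈ X) (hgmax : ∀ f ∈ X, ¬ CS.lt 𝒞 X g f) :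
    ∃ h ∈ Y, 𝒟.label h = 𝒞.label g ∧ X \ {g} ∈ 𝒞.C ∧ Y \ {h} ∈ 𝒟.C ∧
      R (X \ {g}) (Y \ {h}) ∧ (∀ f ∈ Y, ¬ CS.lt 𝒟 Y h f) := by
  have hX := (rel_mem hR hXY).1
  have hXg : X \ {g} ∈ 𝒞.C := removable 𝒞 h𝒞 hX hg hgmax
  obtain ⟨Y', hYt, hRel⟩ := (hR.2 X Y hXY).1 (𝒞.label g) (X \ {g}) (rtrans_intro 𝒞 hX hXg hg)
  obtain ⟨h, hhY, hYeq, hlab, hYC, hYh⟩ := rtrans_elim 𝒟 hYt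
  subst hYeq
  exact ⟨h, hhY, hlab, hXg, hYh, hRel, maximal_of_removable 𝒟 hYh⟩

lemma rev_step_right (h𝒟 : IsStable 𝒟) (hR : IsRB 𝒞 𝒟 R) {X Y} (hXY : R X Y)
    {g : E₂} (hg : g ∈ Y) (hgmax : ∀ f ∈ Y, ¬ CS.lt 𝒟 Y g f) :
    ∃ h ∈ X, 𝒞.label h = 𝒟.label g ∧ Y \ {g} ∈ 𝒟.C ∧ X \ {h} ∈ 𝒞.C ∧
      R (X \ {h}) (Y \ {g}) ∧ (∀ f ∈ X, ¬ CS.lt 𝒞 X h f) := by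
  have hY := (rel_mem hR hXY).2
  have hYg : Y \ {g} ∈ 𝒟.C := removable 𝒟 h𝒟 hY hg hgmax
  obtain ⟨X', hXt, hRel⟩ := (hR.2 X Y hXY).2 (𝒟.label g) (Y \ {g}) (rtrans_intro 𝒟 hY hYg hg)
  obtain ⟨h, hhX, hXeq, hlab, hXC, hXh⟩ := rtrans_elim 𝒞 hXt
  subst hXeq
  exact ⟨h, hhX, hlab, hYg, hXh, hRel, maximal_of_removable 𝒞 hXh⟩

end Bisim
lemma labSet_empty {E : Type u} {L : Type v} (𝒞 : CS E L) (n : ℕ) :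
    labSet 𝒞 (∅ : Set E) n = ∅ := by
  unfold labSet levelEq
  convert Set.image_empty 𝒞.label
  ext f
  simp

section Main

variable {E₁ E₂ : Type u} {L : Type v} {𝒞 : CS E₁ L} {𝒟 : CS E₂ L}
  {R : Set E₁ → Set E₂ → Prop}

lemma levels_eq (h𝒞 : IsStable 𝒞) (h𝒟 : IsStable 𝒟)
    (hac𝒞 : NoEqAC 𝒞) (hac𝒟 : NoEqAC 𝒟) (hR : IsRB 𝒞 𝒟 R) :
    ∀ N : ℕ, ∀ X Y, R X Y → X.ncard ≤ N → ∀ n, labSet 𝒞 X n = labSet 𝒟 Y n := by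
  intro N
  induction N with
  | zero =>
    intro X Y hXY hcard n
    have hX := (rel_mem hR hXY).1
    have hXe : X = ∅ := by
      rw [← Set.ncard_eq_zero (𝒞.finite X hX)]; omega
    subst hXe
    rw [rel_empty h𝒟 hR hXY, labSet_empty, labSet_empty]
  | succ N ih =>
    intro X Y hXY hcard n
    have hX := (rel_mem hR hXY).1
    have hY := (rel_mem hR hXY).2
    rcases eq_or_ne X ∅ with rfl | hXne
    · rw [rel_empty h𝒟 hR hXY, labSet_empty, labSet_empty]
    obtain ⟨e, heX, hemax⟩ :=
      Set.exists_max_image X (depth 𝒞 X) (𝒞.finite X hX)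
        (Set.nonempty_iff_ne_empty.mpr hXne)
    have heord : ∀ f ∈ X, ¬ CS.lt 𝒞 X e f := maximal_of_maxdepth 𝒞 h𝒞 hX heX hemax
    obtain ⟨e', he'Y, hlab', hXe, hYe', hRee, he'ord⟩ := rev_step_left h𝒞 hR hXY heX heord
    have hcard' : (X \ {e}).ncard ≤ N := by
      have := Set.ncard_diff_singleton_lt_of_mem heX (𝒞.finite X hX); omega
    have HD : ∀ n', labSet 𝒞 (X \ {e}) n' = labSet 𝒟 (Y \ {e'}) n' :=
      fun n' => ih (X \ {e}) (Y \ {e'}) hRee hcard' n'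
    have hXdm : labSet 𝒞 (X \ {e}) (depth 𝒞 X e)
        = labSet 𝒞 X (depth 𝒞 X e) \ {𝒞.label e} :=
      labSet_diff_eq 𝒞 h𝒞 hac𝒞 hX heX hXe heord
    have hXdn : ∀ n', n' ≠ depth 𝒞 X e → labSet 𝒞 (X \ {e}) n' = labSet 𝒞 X n' :=
      fun n' hn' => labSet_diff_ne 𝒞 h𝒞 hX heX hXe heord (Ne.symm hn')
    have hYdk : labSet 𝒟 (Y \ {e'}) (depth 𝒟 Y e')
        = labSet 𝒟 Y (depth 𝒟 Y e') \ {𝒞.label e} := by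
      have := labSet_diff_eq 𝒟 h𝒟 hac𝒟 hY he'Y hYe' he'ord
      rwa [hlab'] at this
    have hYdn : ∀ n', n' ≠ depth 𝒟 Y e' → labSet 𝒟 (Y \ {e'}) n' = labSet 𝒟 Y n' :=
      fun n' hn' => labSet_diff_ne 𝒟 h𝒟 hY he'Y hYe' he'ord (Ne.symm hn')
    have haXm : 𝒞.label e ∈ labSet 𝒞 X (depth 𝒞 X e) := mem_labSet 𝒞 heX
    have haYk : 𝒞.label e ∈ labSet 𝒟 Y (depth 𝒟 Y e') := by
      have := mem_labSet 𝒟 he'Y; rwa [hlab'] at this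
    by_cases hkm : depth 𝒟 Y e' = depth 𝒞 X e
    · rcases eq_or_ne n (depth 𝒞 X e) with rfl | hnm
      · refine diff_singleton_inj haXm (hkm ▸ haYk) ?_
        rw [← hXdm, HD (depth 𝒞 X e), ← hkm, hYdk]
      · rw [← hXdn n hnm, HD n, hYdn n (by rw [hkm]; exact hnm)]
    · exfalso
      have hFne : ∀ n', n' ≠ depth 𝒞 X e → n' ≠ depth 𝒟 Y e' →
          labSet 𝒞 X n' = labSet 𝒟 Y n' := by
        intro n' h1 h2
        rw [← hXdn n' h1, HD n', hYdn n' h2]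
      have hYm : labSet 𝒟 Y (depth 𝒞 X e) = labSet 𝒞 X (depth 𝒞 X e) \ {𝒞.label e} := by
        rw [← hYdn (depth 𝒞 X e) (Ne.symm hkm), ← HD (depth 𝒞 X e), hXdm]
      by_cases hA : ∃ c ∈ labSet 𝒞 X (depth 𝒞 X e), c ≠ 𝒞.label e
      · -- Case A: another label at the top level of X
        obtain ⟨c, hc, hca⟩ := hA
        obtain ⟨g, hgX, hgd, hglab⟩ := labSet_nonempty_elim 𝒞 hc
        have hgord : ∀ f ∈ X, ¬ CS.lt 𝒞 X g f := by
          refine maximal_of_maxdepth 𝒞 h𝒞 hX hgX ?_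
          intro f hf; rw [hgd]; exact hemax f hf
        obtain ⟨h2, hh2Y, hlabh2, hXg, hYh2, hRgh, hh2ord⟩ :=
          rev_step_left h𝒞 hR hXY hgX hgord
        have hcardg : (X \ {g}).ncard ≤ N := by
          have := Set.ncard_diff_singleton_lt_of_mem hgX (𝒞.finite X hX); omega
        have HD2 := ih (X \ {g}) (Y \ {h2}) hRgh hcardg (depth 𝒞 X e)
        have hL : labSet 𝒞 (X \ {g}) (depth 𝒞 X e) = labSet 𝒞 X (depth 𝒞 X e) \ {c} := by
          have := labSet_diff_eq 𝒞 h𝒞 hac𝒞 hX hgX hXg hgord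
          rwa [hgd, hglab] at this
        have haL : 𝒞.label e ∈ labSet 𝒞 (X \ {g}) (depth 𝒞 X e) := by
          rw [hL]
          exact ⟨haXm, fun hh => hca (Set.mem_singleton_iff.mp hh).symm⟩
        rw [HD2] at haL
        have : 𝒞.label e ∈ labSet 𝒟 Y (depth 𝒞 X e) :=
          labSet_diff_subset 𝒟 h𝒟 hY hh2Y hYh2 hh2ord (depth 𝒞 X e) haL
        rw [hYm] at this
        exact this.2 rfl
      · -- Case B: top level of X is exactly {label e}
        push_neg at hA
        have hXmA : labSet 𝒞 X (depth 𝒞 X e) = {𝒞.label e} := by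
          apply Set.eq_singleton_iff_unique_mem.mpr
          exact ⟨haXm, fun c hc => hA c hc⟩
        have hm1 : 1 ≤ depth 𝒞 X e := one_le_depth 𝒞 h𝒞 hX heX
        have hk1 : 1 ≤ depth 𝒟 Y e' := one_le_depth 𝒟 h𝒟 hY he'Y
        rcases lt_or_gt_of_ne hkm with hklt | hkgt
        · -- k < m
          have hm2 : 2 ≤ depth 𝒞 X e := by omega
          obtain ⟨d, hdX, hltd, hdd⟩ := exists_cause 𝒞 h𝒞 hX heX hm2
          have hc' : 𝒞.label d ∈ labSet 𝒞 X (depth 𝒞 X e - 1) := by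
            have := mem_labSet 𝒞 hdX; rwa [hdd] at this
          have hYbound : ∀ f ∈ Y, depth 𝒟 Y f ≤ depth 𝒞 X e - 1 := by
            intro f hf
            by_contra hcon
            push_neg at hcon
            have hjf : 𝒟.label f ∈ labSet 𝒟 Y (depth 𝒟 Y f) := mem_labSet 𝒟 hf
            rcases eq_or_ne (depth 𝒟 Y f) (depth 𝒞 X e) with hfm | hfm
            · rw [hfm, hYm, hXmA] at hjf
              simp at hjf
            · have hfk : depth 𝒟 Y f ≠ depth 𝒟 Y e' := by omega
              rw [← hFne _ hfm hfk] at hjf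
              rw [labSet_empty_of_gt 𝒞 hemax (by omega)] at hjf
              exact hjf
          have hdelta : ∀ h3 ∈ Y, depth 𝒟 Y h3 = depth 𝒞 X e - 1 →
              𝒟.label h3 = 𝒞.label e ∧ R (X \ {e}) (Y \ {h3}) := by
            intro h3 hh3 hd3
            have hh3ord : ∀ f ∈ Y, ¬ CS.lt 𝒟 Y h3 f := by
              refine maximal_of_maxdepth 𝒟 h𝒟 hY hh3 ?_
              intro f hf; rw [hd3]; exact hYbound f hf
            obtain ⟨f, hfX, hlabf, hYh3, hXf, hRfh, hford⟩ :=
              rev_step_right h𝒟 hR hXY hh3 hh3ord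
            have hcardf : (X \ {f}).ncard ≤ N := by
              have := Set.ncard_diff_singleton_lt_of_mem hfX (𝒞.finite X hX); omega
            have HD3 := ih (X \ {f}) (Y \ {h3}) hRfh hcardf (depth 𝒞 X e)
            have hRside : labSet 𝒟 (Y \ {h3}) (depth 𝒞 X e) = ∅ := by
              rw [labSet_diff_ne 𝒟 h𝒟 hY hh3 hYh3 hh3ord (by omega)]
              rw [hYm, hXmA]
              simp
            rw [hRside] at HD3
            by_cases hfm : depth 𝒞 X f = depth 𝒞 X e
            · have hLf : labSet 𝒞 (X \ {f}) (depth 𝒞 X e)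
                  = labSet 𝒞 X (depth 𝒞 X e) \ {𝒞.label f} := by
                have := labSet_diff_eq 𝒞 h𝒞 hac𝒞 hX hfX hXf hford
                rwa [hfm] at this
              rw [hLf, hXmA] at HD3
              have hfa : 𝒞.label f = 𝒞.label e := by
                by_contra hne2
                have hmem : 𝒞.label e ∈ ({𝒞.label e} : Set L) \ {𝒞.label f} :=
                  ⟨rfl, fun hh => hne2 (Set.mem_singleton_iff.mp hh).symm⟩
                rw [HD3] at hmem
                exact hmem
              have hfe : f = e :=
                level_inj 𝒞 h𝒞 hac𝒞 hX ⟨hfX, hfm⟩ ⟨heX, rfl⟩ hfa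
              refine ⟨by rw [← hlabf]; exact hfa, ?_⟩
              rw [← hfe]
              exact hRfh
            · exfalso
              rw [labSet_diff_ne 𝒞 h𝒞 hX hfX hXf hford hfm, hXmA] at HD3
              exact (Set.singleton_ne_empty _) HD3
          have hYlev : ∃ h3 ∈ Y, depth 𝒟 Y h3 = depth 𝒞 X e - 1 := by
            rcases eq_or_ne (depth 𝒟 Y e') (depth 𝒞 X e - 1) with hk2 | hk2
            · exact ⟨e', he'Y, hk2⟩
            · have hmem : 𝒞.label d ∈ labSet 𝒟 Y (depth 𝒞 X e - 1) := by
                rw [← hFne (depth 𝒞 X e - 1) (by omega) (Ne.symm hk2)]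
                exact hc'
              obtain ⟨h3, hh3, hd3, _⟩ := labSet_nonempty_elim 𝒟 hmem
              exact ⟨h3, hh3, hd3⟩
          obtain ⟨h3, hh3Y, hd3⟩ := hYlev
          obtain ⟨hh3a, hReh3⟩ := hdelta h3 hh3Y hd3
          have HD4 := ih (X \ {e}) (Y \ {h3}) hReh3 hcard' (depth 𝒞 X e - 1)
          have hLL : 𝒞.label d ∈ labSet 𝒞 (X \ {e}) (depth 𝒞 X e - 1) := by
            rw [hXdn (depth 𝒞 X e - 1) (by omega)]
            exact hc'
          have hYh3C : Y \ {h3} ∈ 𝒟.C := (rel_mem hR hReh3).2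
          have hh3ord : ∀ f ∈ Y, ¬ CS.lt 𝒟 Y h3 f := by
            refine maximal_of_maxdepth 𝒟 h𝒟 hY hh3Y ?_
            intro f hf; rw [hd3]; exact hYbound f hf
          have hRR : labSet 𝒟 (Y \ {h3}) (depth 𝒞 X e - 1)
              = labSet 𝒟 Y (depth 𝒞 X e - 1) \ {𝒞.label e} := by
            have := labSet_diff_eq 𝒟 h𝒟 hac𝒟 hY hh3Y hYh3C hh3ord
            rwa [hd3, hh3a] at this
          rw [HD4, hRR] at hLL
          have hda : 𝒞.label d = 𝒞.label e := by
            obtain ⟨h4, hh4, hd4, hl4⟩ := labSet_nonempty_elim 𝒟 hLL.1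
            rw [← hl4]
            exact (hdelta h4 hh4 hd4).1
          exact hLL.2 (Set.mem_singleton_iff.mpr hda)
        · -- k > m
          have h2k : 2 ≤ depth 𝒟 Y e' := by omega
          obtain ⟨d, hdY, hltd, hdd⟩ := exists_cause 𝒟 h𝒟 hY he'Y h2k
          have hcd : 𝒟.label d ∈ labSet 𝒟 Y (depth 𝒟 Y e' - 1) := by
            have := mem_labSet 𝒟 hdY; rwa [hdd] at this
          rcases eq_or_ne (depth 𝒟 Y e' - 1) (depth 𝒞 X e) with h1 | h1
          · rw [h1, hYm, hXmA] at hcd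
            simp at hcd
          · have h2 : (depth 𝒟 Y e' - 1) ≠ depth 𝒟 Y e' := by omega
            rw [← hFne (depth 𝒟 Y e' - 1) h1 h2] at hcd
            rw [labSet_empty_of_gt 𝒞 hemax (by omega)] at hcd
            exact hcd

end Main
lemma levelLe_empty {E : Type u} {L : Type v} (𝒞 : CS E L) (n : ℕ) :
    levelLe 𝒞 (∅ : Set E) n = ∅ := by
  unfold levelLe; ext f; simp

section Trunc

variable {E₁ E₂ : Type u} {L : Type v} {𝒞 : CS E₁ L} {𝒟 : CS E₂ L}
  {R : Set E₁ → Set E₂ → Prop}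

lemma trunc_rel (h𝒞 : IsStable 𝒞) (h𝒟 : IsStable 𝒟)
    (hac𝒞 : NoEqAC 𝒞) (hac𝒟 : NoEqAC 𝒟) (hR : IsRB 𝒞 𝒟 R) :
    ∀ N : ℕ, ∀ X Y, R X Y → X.ncard ≤ N → ∀ n,
      R (levelLe 𝒞 X n) (levelLe 𝒟 Y n) := by
  intro N
  induction N with
  | zero =>
    intro X Y hXY hcard n
    have hX := (rel_mem hR hXY).1
    have hXe : X = ∅ := by
      rw [← Set.ncard_eq_zero (𝒞.finite X hX)]; omega
    subst hXe
    rw [rel_empty h𝒟 hR hXY, levelLe_empty, levelLe_empty]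
    exact hR.1.1.1
  | succ N ih =>
    intro X Y hXY hcard n
    have hX := (rel_mem hR hXY).1
    have hY := (rel_mem hR hXY).2
    rcases eq_or_ne X ∅ with rfl | hXne
    · rw [rel_empty h𝒟 hR hXY, levelLe_empty, levelLe_empty]
      exact hR.1.1.1
    obtain ⟨e, heX, hemax⟩ :=
      Set.exists_max_image X (depth 𝒞 X) (𝒞.finite X hX)
        (Set.nonempty_iff_ne_empty.mpr hXne)
    have hL := levels_eq h𝒞 h𝒟 hac𝒞 hac𝒟 hR X.ncard X Y hXY le_rfl
    by_cases hmn : depth 𝒞 X e ≤ n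
    · have hXfull : levelLe 𝒞 X n = X := by
        ext f
        exact ⟨fun h => h.1, fun hf => ⟨hf, le_trans (hemax f hf) hmn⟩⟩
      have hYfull : levelLe 𝒟 Y n = Y := by
        ext f
        refine ⟨fun h => h.1, fun hf => ⟨hf, ?_⟩⟩
        have h1 := mem_labSet 𝒟 hf
        rw [← hL (depth 𝒟 Y f)] at h1
        obtain ⟨g, hgX, hgd, _⟩ := labSet_nonempty_elim 𝒞 h1
        have := hemax g hgX
        omega
      rw [hXfull, hYfull]
      exact hXY
    · push_neg at hmn
      have heord : ∀ f ∈ X, ¬ CS.lt 𝒞 X e f := maximal_of_maxdepth 𝒞 h𝒞 hX heX hemax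
      obtain ⟨e', he'Y, hlab', hXe, hYe', hRee, he'ord⟩ := rev_step_left h𝒞 hR hXY heX heord
      have hcard' : (X \ {e}).ncard ≤ N := by
        have := Set.ncard_diff_singleton_lt_of_mem heX (𝒞.finite X hX); omega
      have hkm : depth 𝒟 Y e' = depth 𝒞 X e := by
        by_contra hkm
        have HD := levels_eq h𝒞 h𝒟 hac𝒞 hac𝒟 hR (X \ {e}).ncard (X \ {e}) (Y \ {e'})
          hRee le_rfl (depth 𝒞 X e)
        have h1 : labSet 𝒞 (X \ {e}) (depth 𝒞 X e)
            = labSet 𝒞 X (depth 𝒞 X e) \ {𝒞.label e} :=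
          labSet_diff_eq 𝒞 h𝒞 hac𝒞 hX heX hXe heord
        have h2 : labSet 𝒟 (Y \ {e'}) (depth 𝒞 X e) = labSet 𝒟 Y (depth 𝒞 X e) :=
          labSet_diff_ne 𝒟 h𝒟 hY he'Y hYe' he'ord hkm
        rw [h1, h2, ← hL (depth 𝒞 X e)] at HD
        have haXm : 𝒞.label e ∈ labSet 𝒞 X (depth 𝒞 X e) := mem_labSet 𝒞 heX
        rw [← HD] at haXm
        exact haXm.2 rfl
      have hXt : levelLe 𝒞 X n = levelLe 𝒞 (X \ {e}) n := by
        ext f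
        constructor
        · rintro ⟨hf, hdf⟩
          have hfe : f ≠ e := by rintro rfl; omega
          refine ⟨⟨hf, fun h => hfe (Set.mem_singleton_iff.mp h)⟩, ?_⟩
          rwa [depth_diff 𝒞 h𝒞 hX hXe heord hf hfe]
        · rintro ⟨⟨hf, hfe⟩, hdf⟩
          have hfe' : f ≠ e := fun h => hfe (Set.mem_singleton_iff.mpr h)
          refine ⟨hf, ?_⟩
          rwa [← depth_diff 𝒞 h𝒞 hX hXe heord hf hfe']
      have hYt : levelLe 𝒟 Y n = levelLe 𝒟 (Y \ {e'}) n := by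
        ext f
        constructor
        · rintro ⟨hf, hdf⟩
          have hfe : f ≠ e' := by
            rintro rfl
            omega
          refine ⟨⟨hf, fun h => hfe (Set.mem_singleton_iff.mp h)⟩, ?_⟩
          rwa [depth_diff 𝒟 h𝒟 hY hYe' he'ord hf hfe]
        · rintro ⟨⟨hf, hfe⟩, hdf⟩
          have hfe' : f ≠ e' := fun h => hfe (Set.mem_singleton_iff.mpr h)
          refine ⟨hf, ?_⟩
          rwa [← depth_diff 𝒟 h𝒟 hY hYe' he'ord hf hfe']
      rw [hXt, hYt]
      exact ih (X \ {e}) (Y \ {e'}) hRee hcard' n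

end Trunc
lemma labelMS_eq {E : Type u} {L : Type v} (𝒞 : CS E L) {S : Set E} (h : S.Finite) :
    labelMS 𝒞 S = h.toFinset.val.map 𝒞.label := by
  unfold labelMS
  rw [dif_pos h]

lemma match_hom {E₁ E₂ : Type u} {L : Type v} (𝒞 : CS E₁ L) (𝒟 : CS E₂ L)
    (hac : NoEqAC 𝒞) (S : Set E₁ → Set E₂ → Prop) (X : Set E₁) (Y : Set E₂)
    (hY : Y ∈ 𝒟.C) (hSXY : S X Y)
    (hmatch : ∀ a X', RTrans 𝒞 a X X' → ∃ Y', RTrans 𝒟 a Y Y' ∧ S X' Y') :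
    ∀ A X', Hom A → REqStep 𝒞 A X X' → ∃ Y', REqStep 𝒟 A Y Y' ∧ S X' Y' := by
  rintro A X' hHom ⟨⟨hX', hXC, hsub, F, hF, hco, hmap⟩, heqd⟩
  have hFdiff : ∀ d ∈ F, d ∈ X \ X' := by
    intro d hd
    rw [← hF]
    exact_mod_cast hd
  have hsingle : ∀ d ∈ F, ∀ e ∈ F, d = e := by
    intro d hd e he2
    refine hac X hXC d (hFdiff d hd).1 e (hFdiff e he2).1 (hco d hd e he2) ?_ ?_
    · refine hHom _ ?_ _ ?_ <;> rw [← hmap] <;>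
        exact Multiset.mem_map_of_mem _ (Finset.mem_val.mpr (by assumption))
    · exact heqd d (hFdiff d hd) e (hFdiff e he2)
  rcases Finset.eq_empty_or_nonempty F with rfl | ⟨f, hfF⟩
  · have hdiffe : X \ X' = ∅ := by rw [← hF]; simp
    have hXX : X' = X :=
      Set.Subset.antisymm hsub (Set.diff_eq_empty.mp hdiffe)
    have hA : A = 0 := by rw [← hmap]; simp
    subst hA
    refine ⟨Y, ⟨⟨hY, hY, subset_rfl, ∅, by simp, by simp, by simp⟩, by simp⟩, ?_⟩
    rw [hXX]
    exact hSXY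
  · have hFf : F = {f} :=
      Finset.eq_singleton_iff_unique_mem.mpr ⟨hfF, fun x hx => hsingle x hx f hfF⟩
    subst hFf
    have hdiff : X \ X' = {f} := by rw [← hF]; simp
    have hrt : RTrans 𝒞 (𝒞.label f) X X' := ⟨hX', hXC, hsub, f, hdiff, rfl⟩
    obtain ⟨Y', hrt', hS⟩ := hmatch _ _ hrt
    obtain ⟨hY'C, hYC2, hsub', g, hdiffg, hlabg⟩ := hrt'
    have hA : A = {𝒞.label f} := by rw [← hmap]; simp
    refine ⟨Y', ⟨⟨hY'C, hY, hsub', {g}, by rw [hdiffg]; simp, ?_, ?_⟩, ?_⟩, hS⟩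
    · intro d hd e he2
      simp only [Finset.mem_singleton] at hd he2
      subst hd; subst he2
      exact ⟨fun h => h.2 rfl, fun h => h.2 rfl⟩
    · rw [hA]
      simp [hlabg]
    · intro d hd e he2
      rw [hdiffg] at hd he2
      simp only [Set.mem_singleton_iff] at hd he2
      rw [hd, he2]

/-- without equidepth auto-concurrency any reverse bisimulation is
an RHESB; in particular related configurations have related truncations at each
depth and equal label multisets at each depth level. -/
theorem stmt19 {E₁ E₂ : Type u} {L : Type v} (𝒞 : CS E₁ L) (𝒟 : CS E₂ L)
    (h𝒞 : IsStable 𝒞) (h𝒟 : IsStable 𝒟)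
    (hac𝒞 : NoEqAC 𝒞) (hac𝒟 : NoEqAC 𝒟)
    (R : Set E₁ → Set E₂ → Prop) (hR : IsRB 𝒞 𝒟 R) :
    IsRHESB 𝒞 𝒟 R ∧
    (∀ X Y, R X Y → ∀ n : ℕ,
      R (levelLe 𝒞 X n) (levelLe 𝒟 Y n) ∧
      labelMS 𝒞 (levelEq 𝒞 X n) = labelMS 𝒟 (levelEq 𝒟 Y n)) := by
  constructor
  · refine ⟨hR.1.1, fun X Y hXY => ?_⟩
    have hX := (rel_mem hR hXY).1
    have hY := (rel_mem hR hXY).2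
    refine ⟨(hR.1.2 X Y hXY).1, (hR.1.2 X Y hXY).2, ?_, ?_⟩
    · exact match_hom 𝒞 𝒟 hac𝒞 R X Y hY hXY (hR.2 X Y hXY).1
    · intro A Y' hHom hstep
      obtain ⟨X', h1, h2⟩ :=
        match_hom 𝒟 𝒞 hac𝒟 (fun Y X => R X Y) Y X hX hXY
          (fun a Y' hrt => by
            obtain ⟨X', h1, h2⟩ := (hR.2 X Y hXY).2 a Y' hrt
            exact ⟨X', h1, h2⟩) A Y' hHom hstep
      exact ⟨X', h1, h2⟩
  · intro X Y hXY n
    have hX := (rel_mem hR hXY).1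
    have hY := (rel_mem hR hXY).2
    refine ⟨trunc_rel h𝒞 h𝒟 hac𝒞 hac𝒟 hR X.ncard X Y hXY le_rfl n, ?_⟩
    have hkey := levels_eq h𝒞 h𝒟 hac𝒞 hac𝒟 hR X.ncard X Y hXY le_rfl n
    have hfinX : (levelEq 𝒞 X n).Finite := (𝒞.finite X hX).subset (fun f hf => hf.1)
    have hfinY : (levelEq 𝒟 Y n).Finite := (𝒟.finite Y hY).subset (fun f hf => hf.1)
    rw [labelMS_eq 𝒞 hfinX, labelMS_eq 𝒟 hfinY]
    have hnd1 : (hfinX.toFinset.val.map 𝒞.label).Nodup := by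
      refine Multiset.Nodup.map_on ?_ hfinX.toFinset.nodup
      intro x hx y hy hxy
      exact level_inj 𝒞 h𝒞 hac𝒞 hX (hfinX.mem_toFinset.mp (Finset.mem_val.mp hx))
        (hfinX.mem_toFinset.mp (Finset.mem_val.mp hy)) hxy
    have hnd2 : (hfinY.toFinset.val.map 𝒟.label).Nodup := by
      refine Multiset.Nodup.map_on ?_ hfinY.toFinset.nodup
      intro x hx y hy hxy
      exact level_inj 𝒟 h𝒟 hac𝒟 hY (hfinY.mem_toFinset.mp (Finset.mem_val.mp hx))
        (hfinY.mem_toFinset.mp (Finset.mem_val.mp hy)) hxy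
    refine (Multiset.Nodup.ext hnd1 hnd2).mpr ?_
    intro b
    simp only [Multiset.mem_map]
    constructor
    · rintro ⟨x, hx, rfl⟩
      have hxL : x ∈ levelEq 𝒞 X n := hfinX.mem_toFinset.mp (Finset.mem_val.mp hx)
      have hmem : 𝒞.label x ∈ labSet 𝒞 X n := ⟨x, hxL, rfl⟩
      rw [hkey] at hmem
      obtain ⟨y2, hy2, hl⟩ := hmem
      exact ⟨y2, Finset.mem_val.mpr (hfinY.mem_toFinset.mpr hy2), hl⟩
    · rintro ⟨x, hx, rfl⟩
      have hxL : x ∈ levelEq 𝒟 Y n := hfinY.mem_toFinset.mp (Finset.mem_val.mp hx)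
      have hmem : 𝒟.label x ∈ labSet 𝒟 Y n := ⟨x, hxL, rfl⟩
      rw [← hkey] at hmem
      obtain ⟨y2, hy2, hl⟩ := hmem
      exact ⟨y2, Finset.mem_val.mpr (hfinX.mem_toFinset.mpr hy2), hl⟩
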